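/- Fix d ≥ 1 and α ≤ d/2 − 1 with α > 0. Let dρ(λ) = C_d λ^{d/2 − 1} dλ on [0, ∞) and dρ̃(λ) = C_d (λ − δ)_+^{d/2 − 1} dλ (the translate of ρ by δ > 0). For ε > 0 let f_ε(x) = max(x − ε, 0). Then liminf_{ε→0} |∫ f_ε((1+λ)^{−α}) dρ(λ) − ∫ f_ε((1+λ)^{−α}) dρ̃(λ)| = +∞. -/

import Mathlib

open MeasureTheory Filter Topology
open Set


/-- key convexity inequality: `α (b-a) b^(-α-1) ≤ a^(-α) - b^(-α)` for `0 < a ≤ b`. -/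
lemma bern_aux {α a b : ℝ} (hα : 0 < α) (ha : 0 < a) (hab : a ≤ b) :
    α * (b - a) * b ^ (-α - 1) ≤ a ^ (-α) - b ^ (-α) := by
  have hb : 0 < b := lt_of_lt_of_le ha hab
  have ht : 0 < a / b := div_pos ha hb
  have key : 1 + α * (1 - a / b) ≤ (a / b) ^ (-α) := by
    rw [Real.rpow_def_of_pos ht]
    have h1 : Real.log (a / b) ≤ a / b - 1 := Real.log_le_sub_one_of_pos ht
    have h2 : Real.log (a / b) * (-α) + 1 ≤ Real.exp (Real.log (a / b) * (-α)) :=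
      Real.add_one_le_exp _
    nlinarith
  have hdiv : (a / b) ^ (-α) = a ^ (-α) / b ^ (-α) := Real.div_rpow ha.le hb.le _
  have hbpos : (0:ℝ) < b ^ (-α) := Real.rpow_pos_of_pos hb _
  have hsub : b ^ (-α - 1) = b ^ (-α) / b := by
    rw [show (-α - 1 : ℝ) = -α - 1 from rfl, Real.rpow_sub hb, Real.rpow_one]
  rw [hdiv] at key
  rw [hsub]
  have := (mul_le_mul_of_nonneg_right key hbpos.le)
  rw [div_mul_cancel₀ _ hbpos.ne'] at this
  have hb' : b ≠ 0 := hb.ne'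
  have heq : α * (b - a) * (b ^ (-α) / b) = α * (1 - a / b) * b ^ (-α) := by
    field_simp
  rw [heq]
  nlinarith [this]

lemma integ_aux {α p Cd c ε : ℝ} (hα : 0 < α) (hp : 0 < p) (hc : 1 ≤ c) (hε : 0 < ε) :
    IntegrableOn (fun lam => max ((c + lam) ^ (-α) - ε) 0 * (Cd * lam ^ p)) (Set.Ioi (0:ℝ)) := by
  set R := ε ^ (-α⁻¹) with hR
  have hR0 : 0 < R := Real.rpow_pos_of_pos hε _
  rw [← Set.Ioc_union_Ioi_eq_Ioi hR0.le]
  apply IntegrableOn.union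
  · have c1 : ContinuousOn (fun lam : ℝ => (c + lam) ^ (-α)) (Icc 0 R) :=
      (continuousOn_const.add continuousOn_id).rpow_const
        (fun x hx => Or.inl (by have := hx.1; exact (show (0:ℝ) < c + x by linarith).ne'))
    have c2 : ContinuousOn (fun lam : ℝ => lam ^ p) (Icc 0 R) :=
      continuousOn_id.rpow_const (fun x _ => Or.inr hp.le)
    exact ((((continuous_id.max continuous_const).comp_continuousOn
      (c1.sub continuousOn_const))).mul
      (continuousOn_const.mul c2)).integrableOn_compact isCompact_Icc |>.mono_set
      Ioc_subset_Icc_self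
  · rw [integrableOn_congr_fun (g := fun _ => (0:ℝ)) ?_ measurableSet_Ioi]
    · exact integrableOn_zero
    · intro x hx
      have hx' : R < x := hx
      have h1 : R ≤ c + x := by linarith
      have h2 : (c + x) ^ (-α) ≤ ε := by
        calc (c + x) ^ (-α) ≤ R ^ (-α) :=
              Real.rpow_le_rpow_of_nonpos hR0 h1 (by linarith)
          _ = ε := by
              rw [hR, ← Real.rpow_mul hε.le, neg_mul_neg, inv_mul_cancel₀ hα.ne',
                Real.rpow_one]
      simp [max_eq_right (by linarith : (c + x) ^ (-α) - ε ≤ 0)]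


set_option maxHeartbeats 1000000 in
/-- Optimality of `α > d/2 - 1`: for `0 < α ≤ d/2 - 1`, with `dρ(λ) = C_d λ^{d/2-1} dλ`
on `(0,∞)` and `ρ̃` its translate by `δ > 0`, and `f_ε(x) = max (x - ε) 0`,
`liminf_{ε → 0⁺} |∫ f_ε((1+λ)^{-α}) dρ - ∫ f_ε((1+λ)^{-α}) dρ̃| = +∞`, i.e. the
difference tends to infinity as `ε → 0⁺`. -/
theorem stmt14 (d : ℕ) (hd : 1 ≤ d) (α δ Cd : ℝ)
    (hα : 0 < α) (hαd : α ≤ (d : ℝ) / 2 - 1) (hδ : 0 < δ) (hC : 0 < Cd) :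
    Tendsto (fun ε : ℝ =>
      |(∫ lam in Set.Ioi (0 : ℝ),
          max ((1 + lam) ^ (-α) - ε) 0 * (Cd * lam ^ ((d : ℝ) / 2 - 1))) -
        ∫ lam in Set.Ioi (0 : ℝ),
          max ((1 + lam + δ) ^ (-α) - ε) 0 * (Cd * lam ^ ((d : ℝ) / 2 - 1))|)
      (𝓝[>] (0 : ℝ)) atTop := by
  set p : ℝ := (d : ℝ) / 2 - 1 with hpdef
  have hαp : α ≤ p := hαd
  have hp : 0 < p := lt_of_lt_of_le hα hαp
  rw [tendsto_atTop]
  intro M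
  -- constants
  set c' : ℝ := α * δ * 3 ^ (-α - 1) * Cd with hc'
  have h3pos : (0:ℝ) < 3 ^ (-α - 1) := Real.rpow_pos_of_pos (by norm_num) _
  have hc'pos : 0 < c' := by positivity
  set L : ℝ := max 1 δ with hLdef
  have hL1 : 1 ≤ L := le_max_left _ _
  have hLδ : δ ≤ L := le_max_right _ _
  have hL0 : 0 < L := lt_of_lt_of_le one_pos hL1
  set x : ℝ := max ((M + 1) / c') 0 with hxdef
  set T : ℝ := L * Real.exp x with hTdef
  have hTL : L ≤ T := by
    have h1 : 1 ≤ Real.exp x := Real.one_le_exp (le_max_right _ _)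
    nlinarith
  have hT0 : 0 < T := lt_of_lt_of_le hL0 hTL
  have hlog : M + 1 ≤ c' * (Real.log T - Real.log L) := by
    rw [hTdef, Real.log_mul hL0.ne' (Real.exp_pos _).ne', Real.log_exp]
    have hxge : (M + 1) / c' ≤ x := le_max_left _ _
    have h2 : c' * ((M + 1) / c') ≤ c' * x := mul_le_mul_of_nonneg_left hxge hc'pos.le
    rw [mul_div_cancel₀ _ hc'pos.ne'] at h2
    calc M + 1 ≤ c' * x := h2
      _ = c' * (Real.log L + x - Real.log L) := by ring
  set K : ℝ := Cd * T ^ p * (T - L) with hKdef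
  have hTp : (0:ℝ) < T ^ p := Real.rpow_pos_of_pos hT0 _
  have hK0 : 0 ≤ K := mul_nonneg (by positivity) (by linarith)
  have hε₀ : (0:ℝ) < 1 / (K + 1) := by positivity
  filter_upwards [Ioo_mem_nhdsGT_of_mem (show (0:ℝ) ∈ Ico 0 (1 / (K + 1)) from ⟨le_refl _, hε₀⟩)]
    with ε hεmem
  obtain ⟨hε1, hε2⟩ := hεmem
  -- integrability
  have int1 : IntegrableOn (fun lam => max ((1 + lam) ^ (-α) - ε) 0 * (Cd * lam ^ p))
      (Set.Ioi (0:ℝ)) := integ_aux hα hp le_rfl hε1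
  have efun : (fun lam : ℝ => max ((1 + lam + δ) ^ (-α) - ε) 0 * (Cd * lam ^ p)) =
      (fun lam : ℝ => max (((1 + δ) + lam) ^ (-α) - ε) 0 * (Cd * lam ^ p)) := by
    funext lam; rw [show 1 + lam + δ = (1 + δ) + lam by ring]
  have int2 : IntegrableOn (fun lam => max ((1 + lam + δ) ^ (-α) - ε) 0 * (Cd * lam ^ p))
      (Set.Ioi (0:ℝ)) := by
    rw [efun]; exact integ_aux hα hp (by linarith) hε1
  rw [← integral_sub int1 int2]
  -- the integrand difference
  set g : ℝ → ℝ := fun lam => max ((1 + lam) ^ (-α) - ε) 0 * (Cd * lam ^ p) -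
      max ((1 + lam + δ) ^ (-α) - ε) 0 * (Cd * lam ^ p) with hgdef
  have hgnonneg : ∀ lam ∈ Set.Ioi (0:ℝ), 0 ≤ g lam := by
    intro lam hlam
    have hlam0 : (0:ℝ) < lam := hlam
    have hmono : (1 + lam + δ) ^ (-α) ≤ (1 + lam) ^ (-α) :=
      Real.rpow_le_rpow_of_nonpos (by linarith) (by linarith) (by linarith)
    have hx : max ((1 + lam + δ) ^ (-α) - ε) 0 ≤ max ((1 + lam) ^ (-α) - ε) 0 :=
      max_le_max (by linarith) le_rfl
    have hCl : (0:ℝ) ≤ Cd * lam ^ p := by positivity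
    simp only [hgdef, sub_nonneg]
    exact mul_le_mul_of_nonneg_right hx hCl
  rw [abs_of_nonneg (setIntegral_nonneg measurableSet_Ioi hgnonneg)]
  -- restrict to Ioc L T
  have hsub : Set.Ioc L T ⊆ Set.Ioi (0:ℝ) := fun y hy => lt_trans hL0 hy.1
  have hgint : IntegrableOn g (Set.Ioi (0:ℝ)) := int1.sub int2
  have step1 : ∫ lam in Set.Ioc L T, g lam ≤ ∫ lam in Set.Ioi (0:ℝ), g lam := by
    refine setIntegral_mono_set hgint ?_ (HasSubset.Subset.eventuallyLE hsub)
    exact (ae_restrict_iff' measurableSet_Ioi).mpr (ae_of_all _ hgnonneg)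
  -- the minorant
  set m : ℝ → ℝ := fun lam => c' * lam⁻¹ - ε * (Cd * T ^ p) with hmdef
  have hm_int : IntegrableOn m (Set.Ioc L T) := by
    have cinv : ContinuousOn (fun lam : ℝ => lam⁻¹) (Icc L T) :=
      continuousOn_id.inv₀ (fun y hy => ne_of_gt (lt_of_lt_of_le hL0 hy.1))
    exact (((continuousOn_const.mul cinv).sub continuousOn_const).integrableOn_compact
      isCompact_Icc).mono_set Ioc_subset_Icc_self
  have hg_int : IntegrableOn g (Set.Ioc L T) := hgint.mono_set hsub
  have step2 : ∫ lam in Set.Ioc L T, m lam ≤ ∫ lam in Set.Ioc L T, g lam := by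
    refine setIntegral_mono_on hm_int hg_int measurableSet_Ioc ?_
    intro lam hlam
    obtain ⟨hlamL, hlamT⟩ := hlam
    have hlam1 : (1:ℝ) < lam := lt_of_le_of_lt hL1 hlamL
    have hlamδ : δ < lam := lt_of_le_of_lt hLδ hlamL
    have hlam0 : (0:ℝ) < lam := lt_trans one_pos hlam1
    set a := (1 + lam) ^ (-α) with hadef
    set b := (1 + lam + δ) ^ (-α) with hbdef
    have hb0 : (0:ℝ) ≤ b := Real.rpow_nonneg (by linarith) _
    have h1 : a - ε - b ≤ max (a - ε) 0 - max (b - ε) 0 := by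
      have ha' := le_max_left (a - ε) 0
      have hb' : max (b - ε) 0 ≤ b := max_le (by linarith) hb0
      linarith
    have hCl : (0:ℝ) ≤ Cd * lam ^ p := by positivity
    -- key1 : c' * lam⁻¹ ≤ (a - b) * (Cd * lam ^ p)
    have e1 : lam ^ (-1:ℝ) ≤ lam ^ ((-α - 1) + p) :=
      Real.rpow_le_rpow_of_exponent_le hlam1.le (by linarith)
    have e2 : (3:ℝ) ^ (-α - 1) * lam ^ ((-α - 1) + p) = (3 * lam) ^ (-α - 1) * lam ^ p := by
      rw [Real.rpow_add hlam0, Real.mul_rpow (by norm_num) hlam0.le]; ring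
    have e3 : (3 * lam) ^ (-α - 1) ≤ (1 + lam + δ) ^ (-α - 1) :=
      Real.rpow_le_rpow_of_nonpos (by linarith) (by linarith) (by linarith)
    have e4 : α * δ * (1 + lam + δ) ^ (-α - 1) ≤ a - b := by
      have := bern_aux hα (show (0:ℝ) < 1 + lam by linarith)
        (show (1:ℝ) + lam ≤ 1 + lam + δ by linarith)
      rw [show (1 + lam + δ) - (1 + lam) = δ by ring] at this
      exact this
    have key1 : c' * lam⁻¹ ≤ (a - b) * (Cd * lam ^ p) := by
      have hlp : (0:ℝ) ≤ lam ^ p := Real.rpow_nonneg hlam0.le _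
      calc c' * lam⁻¹ = (α * δ) * ((3:ℝ) ^ (-α - 1) * lam ^ (-1:ℝ)) * Cd := by
            rw [Real.rpow_neg_one]; ring
        _ ≤ (α * δ) * ((3:ℝ) ^ (-α - 1) * lam ^ ((-α - 1) + p)) * Cd :=
            mul_le_mul_of_nonneg_right (mul_le_mul_of_nonneg_left
              (mul_le_mul_of_nonneg_left e1 h3pos.le) (by positivity)) hC.le
        _ = (α * δ) * ((3 * lam) ^ (-α - 1) * lam ^ p) * Cd := by rw [e2]
        _ ≤ (α * δ) * ((1 + lam + δ) ^ (-α - 1) * lam ^ p) * Cd :=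
            mul_le_mul_of_nonneg_right (mul_le_mul_of_nonneg_left
              (mul_le_mul_of_nonneg_right e3 hlp) (by positivity)) hC.le
        _ = (α * δ * (1 + lam + δ) ^ (-α - 1)) * (Cd * lam ^ p) := by ring
        _ ≤ (a - b) * (Cd * lam ^ p) := mul_le_mul_of_nonneg_right e4 hCl
    have key2 : ε * (Cd * lam ^ p) ≤ ε * (Cd * T ^ p) := by
      have := Real.rpow_le_rpow hlam0.le hlamT hp.le
      have h' : Cd * lam ^ p ≤ Cd * T ^ p := mul_le_mul_of_nonneg_left this hC.le
      exact mul_le_mul_of_nonneg_left h' hε1.le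
    have hmul := mul_le_mul_of_nonneg_right h1 hCl
    rw [sub_mul, sub_mul] at hmul
    rw [sub_mul] at key1
    simp only [hmdef, hgdef]
    linarith
  -- compute the integral of the minorant
  have hinv_int : IntegrableOn (fun lam : ℝ => lam⁻¹) (Set.Ioc L T) := by
    have cinv : ContinuousOn (fun lam : ℝ => lam⁻¹) (Icc L T) :=
      continuousOn_id.inv₀ (fun y hy => ne_of_gt (lt_of_lt_of_le hL0 hy.1))
    exact (cinv.integrableOn_compact isCompact_Icc).mono_set Ioc_subset_Icc_self
  have hval : ∫ lam in Set.Ioc L T, m lam =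
      c' * (Real.log T - Real.log L) - ε * (Cd * T ^ p) * (T - L) := by
    simp only [hmdef]
    rw [integral_sub (hinv_int.const_mul c') ((integrableOn_const_iff).mpr (Or.inr measure_Ioc_lt_top)),
      integral_const_mul]
    have hIoc : ∫ lam in Set.Ioc L T, lam⁻¹ = Real.log T - Real.log L := by
      rw [← intervalIntegral.integral_of_le hTL, integral_inv_of_pos hL0 hT0,
        Real.log_div hT0.ne' hL0.ne']
    rw [hIoc, setIntegral_const, Real.volume_real_Ioc_of_le hTL]
    ring_nf
  -- conclude
  have hεK : ε * (Cd * T ^ p) * (T - L) ≤ 1 := by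
    have h1 : ε * (Cd * T ^ p * (T - L)) ≤ (1 / (K + 1)) * K := by
      rw [← hKdef]
      exact mul_le_mul hε2.le le_rfl hK0 hε₀.le
    have h2 : (1 / (K + 1)) * K ≤ 1 := by
      rw [div_mul_eq_mul_div, one_mul, div_le_one (by linarith)]
      linarith
    calc ε * (Cd * T ^ p) * (T - L) = ε * (Cd * T ^ p * (T - L)) := by ring
      _ ≤ (1 / (K + 1)) * K := h1
      _ ≤ 1 := h2
  calc M = (M + 1) - 1 := by ring
    _ ≤ c' * (Real.log T - Real.log L) - ε * (Cd * T ^ p) * (T - L) := by linarith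
    _ = ∫ lam in Set.Ioc L T, m lam := hval.symm
    _ ≤ ∫ lam in Set.Ioc L T, g lam := step2
    _ ≤ ∫ lam in Set.Ioi (0:ℝ), g lam := step1
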